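/- Let (A₀,A₁), (B₀,B₁), (C₀,C₁) be ordered Banach couples (A₁ ⊂ A₀ with norm-1 inclusion, and similarly for B and C), mutually closed. Suppose a bilinear operator T satisfies K(t, T(f,g); C⃗) ≤ c ∫₀^∞ K(t/u, f; A⃗) K(u, g; B⃗) du/u for all t > 0. Then for all f ∈ A₁, g ∈ B₁ and all 0 < t < 1: K(t, T(f,g); C⃗) ≤ c' t (1 + log(1/t)) ‖f‖_{A₁} ‖g‖_{B₁}, i.e. T maps A₁ × B₁ boundedly into the space Exp(C⃗) = { h : sup_{0<t<1} K(t,h;C⃗)/(t(1+log(1/t))) < ∞ }. -/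

import Mathlib

open Set ENNReal MeasureTheory

structure IsENorm {E : Type*} [AddCommGroup E] (N : E → ℝ≥0∞) : Prop where
  map_zero : N 0 = 0
  add_le : ∀ x y : E, N (x + y) ≤ N x + N y
  neg_eq : ∀ x : E, N (-x) = N x

noncomputable def Kfun {E : Type*} [AddCommGroup E] (N₀ N₁ : E → ℝ≥0∞) (t : ℝ) (f : E) : ℝ≥0∞ :=
  ⨅ g : E, N₀ g + ENNReal.ofReal t * N₁ (f - g)

lemma Kfun_le_min {E : Type*} [AddCommGroup E] {N₀ N₁ : E → ℝ≥0∞}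
    (h₀ : IsENorm N₀) (h₁ : IsENorm N₁) (hord : ∀ x, N₀ x ≤ N₁ x) (s : ℝ) (f : E) :
    Kfun N₀ N₁ s f ≤ min 1 (ENNReal.ofReal s) * N₁ f := by
  have h1 : Kfun N₀ N₁ s f ≤ N₁ f := by
    refine le_trans (iInf_le _ f) ?_
    simp [h₁.map_zero, hord f]
  have h2 : Kfun N₀ N₁ s f ≤ ENNReal.ofReal s * N₁ f := by
    refine le_trans (iInf_le _ 0) ?_
    simp [h₀.map_zero]
  rcases le_total (1 : ℝ≥0∞) (ENNReal.ofReal s) with h | h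
  · rw [min_eq_left h, one_mul]; exact h1
  · rw [min_eq_right h]; exact h2

/-- If the three couples are ordered (norm-one inclusion `X₁ ⊆ X₀`) and the bilinear operator
satisfies `K(t, T(f,g); C⃗) ≤ c ∫₀^∞ K(t/u, f; A⃗) K(u, g; B⃗) du/u`, then for `f ∈ A₁`,
`g ∈ B₁`, and `0 < t < 1`, `K(t, T(f,g); C⃗) ≤ c' t (1 + log(1/t)) ‖f‖_{A₁} ‖g‖_{B₁}`;
i.e. `T : A₁ × B₁ → Exp(C⃗)` boundedly. -/
theorem bilinear_into_Exp {EA EB EC : Type*}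
    [AddCommGroup EA] [Module ℝ EA] [AddCommGroup EB] [Module ℝ EB]
    [AddCommGroup EC] [Module ℝ EC]
    (NA₀ NA₁ : EA → ℝ≥0∞) (hA₀ : IsENorm NA₀) (hA₁ : IsENorm NA₁)
    (NB₀ NB₁ : EB → ℝ≥0∞) (hB₀ : IsENorm NB₀) (hB₁ : IsENorm NB₁)
    (NC₀ NC₁ : EC → ℝ≥0∞) (hC₀ : IsENorm NC₀) (hC₁ : IsENorm NC₁)
    (hordA : ∀ x, NA₀ x ≤ NA₁ x) (hordB : ∀ x, NB₀ x ≤ NB₁ x) (hordC : ∀ x, NC₀ x ≤ NC₁ x)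
    (T : EA → EB → EC) (c : ℝ) (hc : 0 < c)
    (hT : ∀ (f : EA) (g : EB) (t : ℝ), 0 < t →
      Kfun NC₀ NC₁ t (T f g)
        ≤ ENNReal.ofReal c *
            ∫⁻ u in Set.Ioi (0:ℝ), Kfun NA₀ NA₁ (t / u) f * Kfun NB₀ NB₁ u g
              / ENNReal.ofReal u) :
    ∃ C : ℝ, 0 < C ∧ ∀ (f : EA) (g : EB), ∀ t ∈ Set.Ioo (0:ℝ) 1,
      Kfun NC₀ NC₁ t (T f g)
        ≤ ENNReal.ofReal (C * (t * (1 + Real.log (1 / t)))) * (NA₁ f * NB₁ g) := by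
  refine ⟨2 * c, by linarith, fun f g t ht => ?_⟩
  obtain ⟨ht0, ht1⟩ := ht
  have hL0 : 0 ≤ Real.log (1 / t) :=
    Real.log_nonneg (by rw [le_div_iff₀ ht0]; linarith)
  set L : ℝ := Real.log (1 / t) with hL
  set N : ℝ≥0∞ := NA₁ f * NB₁ g with hN
  set F : ℝ → ℝ≥0∞ := fun u =>
    (Set.Ioc (0:ℝ) t).indicator (fun _ => 1) u +
    (Set.Ioc t 1).indicator (fun u => ENNReal.ofReal (t / u)) u +
    (Set.Ioi (1:ℝ)).indicator (fun u => ENNReal.ofReal (t * u ^ (-2 : ℝ))) u with hF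
  have hm1 : Measurable fun u : ℝ => (Set.Ioc (0:ℝ) t).indicator (fun _ => (1:ℝ≥0∞)) u :=
    measurable_const.indicator measurableSet_Ioc
  have hm2 : Measurable fun u : ℝ =>
      (Set.Ioc t 1).indicator (fun u => ENNReal.ofReal (t / u)) u := by
    apply Measurable.indicator ?_ measurableSet_Ioc
    fun_prop
  have hm3 : Measurable fun u : ℝ =>
      (Set.Ioi (1:ℝ)).indicator (fun u => ENNReal.ofReal (t * u ^ (-2:ℝ))) u := by
    apply Measurable.indicator ?_ measurableSet_Ioi
    exact ((measurable_id.pow_const (-2:ℝ)).const_mul t).ennreal_ofReal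
  have hFmeas : Measurable F := by
    rw [hF]; exact (hm1.add hm2).add hm3
  -- pointwise bound of the integrand
  have hpt : ∀ u ∈ Set.Ioi (0:ℝ),
      Kfun NA₀ NA₁ (t / u) f * Kfun NB₀ NB₁ u g / ENNReal.ofReal u ≤ F u * N := by
    intro u hu
    rw [Set.mem_Ioi] at hu
    have hou0 : ENNReal.ofReal u ≠ 0 := (ENNReal.ofReal_pos.2 hu).ne'
    have hout : ENNReal.ofReal u ≠ ⊤ := ENNReal.ofReal_ne_top
    have step1 : Kfun NA₀ NA₁ (t / u) f * Kfun NB₀ NB₁ u g / ENNReal.ofReal u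
        ≤ (min 1 (ENNReal.ofReal (t / u)) * min 1 (ENNReal.ofReal u) / ENNReal.ofReal u) * N := by
      have := mul_le_mul' (Kfun_le_min hA₀ hA₁ hordA (t / u) f) (Kfun_le_min hB₀ hB₁ hordB u g)
      refine le_trans (ENNReal.div_le_div_right this _) (le_of_eq ?_)
      simp only [div_eq_mul_inv, hN]; ring
    refine step1.trans (mul_le_mul_left ?_ N)
    simp only [hF]
    rcases le_or_gt u t with h1 | h1
    · -- u ≤ t : bound by 1
      have hb : min 1 (ENNReal.ofReal (t / u)) * min 1 (ENNReal.ofReal u) / ENNReal.ofReal u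
          ≤ 1 := by
        calc min 1 (ENNReal.ofReal (t / u)) * min 1 (ENNReal.ofReal u) / ENNReal.ofReal u
            ≤ 1 * ENNReal.ofReal u / ENNReal.ofReal u :=
              ENNReal.div_le_div_right (mul_le_mul' (min_le_left _ _) (min_le_right _ _)) _
          _ = 1 := by rw [one_mul, ENNReal.div_self hou0 hout]
      rw [Set.indicator_of_mem (show u ∈ Set.Ioc (0:ℝ) t from ⟨hu, h1⟩)]
      exact hb.trans (le_add_of_le_of_nonneg (le_add_of_le_of_nonneg le_rfl zero_le)
        zero_le)
    · rcases le_or_gt u 1 with h2 | h2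
      · -- t < u ≤ 1 : bound by ofReal (t/u)
        have hb : min 1 (ENNReal.ofReal (t / u)) * min 1 (ENNReal.ofReal u) / ENNReal.ofReal u
            ≤ ENNReal.ofReal (t / u) := by
          calc min 1 (ENNReal.ofReal (t / u)) * min 1 (ENNReal.ofReal u) / ENNReal.ofReal u
              ≤ ENNReal.ofReal (t / u) * ENNReal.ofReal u / ENNReal.ofReal u :=
                ENNReal.div_le_div_right (mul_le_mul' (min_le_right _ _) (min_le_right _ _)) _
            _ = ENNReal.ofReal (t / u) := by
                rw [mul_div_assoc, ENNReal.div_self hou0 hout, mul_one]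
        rw [Set.indicator_of_mem (show u ∈ Set.Ioc t 1 from ⟨h1, h2⟩)]
        exact hb.trans (le_add_of_le_of_nonneg (le_add_of_nonneg_left zero_le) zero_le)
      · -- 1 < u
        have hb : min 1 (ENNReal.ofReal (t / u)) * min 1 (ENNReal.ofReal u) / ENNReal.ofReal u
            ≤ ENNReal.ofReal (t * u ^ (-2:ℝ)) := by
          have heq : t / u / u = t * u ^ (-2 : ℝ) := by
            have h2' : u ^ (-2:ℝ) = (u * u)⁻¹ := by
              rw [show (-2:ℝ) = -((2:ℕ):ℝ) by norm_num, Real.rpow_neg (le_of_lt hu),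
                Real.rpow_natCast, pow_two]
            rw [div_div, h2', div_eq_mul_inv]
          calc min 1 (ENNReal.ofReal (t / u)) * min 1 (ENNReal.ofReal u) / ENNReal.ofReal u
              ≤ ENNReal.ofReal (t / u) * 1 / ENNReal.ofReal u :=
                ENNReal.div_le_div_right (mul_le_mul' (min_le_right _ _) (min_le_left _ _)) _
            _ = ENNReal.ofReal (t / u) / ENNReal.ofReal u := by rw [mul_one]
            _ = ENNReal.ofReal (t / u / u) := (ENNReal.ofReal_div_of_pos hu).symm
            _ = ENNReal.ofReal (t * u ^ (-2:ℝ)) := by rw [heq]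
        rw [Set.indicator_of_mem (show u ∈ Set.Ioi (1:ℝ) from h2)]
        exact hb.trans (le_add_of_nonneg_left zero_le)
  -- integral of the majorant
  have hJ : (∫⁻ u in Set.Ioi (0:ℝ), F u) ≤ ENNReal.ofReal (t * (2 + L)) := by
    have hIoc1 : Set.Ioc (0:ℝ) t ⊆ Set.Ioi 0 := fun x hx => hx.1
    have hIoc2 : Set.Ioc t 1 ⊆ Set.Ioi 0 := fun x hx => lt_trans ht0 hx.1
    have hIoi3 : Set.Ioi (1:ℝ) ⊆ Set.Ioi 0 := fun x hx => show (0:ℝ) < x from lt_trans one_pos hx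
    have e1 : (∫⁻ u in Set.Ioi (0:ℝ), (Set.Ioc (0:ℝ) t).indicator (fun _ => (1:ℝ≥0∞)) u)
        = ENNReal.ofReal t := by
      rw [lintegral_indicator measurableSet_Ioc, Measure.restrict_restrict measurableSet_Ioc,
        Set.inter_eq_self_of_subset_left hIoc1, setLIntegral_one, Real.volume_Ioc, sub_zero]
    have e2 : (∫⁻ u in Set.Ioi (0:ℝ), (Set.Ioc t 1).indicator (fun u => ENNReal.ofReal (t / u)) u)
        = ENNReal.ofReal (t * L) := by
      rw [lintegral_indicator measurableSet_Ioc, Measure.restrict_restrict measurableSet_Ioc,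
        Set.inter_eq_self_of_subset_left hIoc2]
      have hint : IntegrableOn (fun u => t / u) (Set.Ioc t 1) := by
        apply (ContinuousOn.integrableOn_Icc ?_).mono_set Set.Ioc_subset_Icc_self
        exact continuousOn_const.div continuousOn_id
          (fun x hx => ne_of_gt (lt_of_lt_of_le ht0 hx.1))
      rw [← ofReal_integral_eq_lintegral_ofReal hint ?_]
      · congr 1
        rw [← intervalIntegral.integral_of_le (le_of_lt ht1),
          show (fun u : ℝ => t / u) = (fun u : ℝ => t * (1 / u)) from funext fun u => by ring,
          intervalIntegral.integral_const_mul,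
          integral_one_div (by
            intro h
            rw [Set.mem_uIcc] at h
            rcases h with ⟨h, _⟩ | ⟨_, h⟩ <;> linarith)]
      · filter_upwards [ae_restrict_mem measurableSet_Ioc] with x hx
        exact div_nonneg (le_of_lt ht0) (le_of_lt (lt_trans ht0 hx.1))
    have e3 : (∫⁻ u in Set.Ioi (0:ℝ),
          (Set.Ioi (1:ℝ)).indicator (fun u => ENNReal.ofReal (t * u ^ (-2:ℝ))) u)
        = ENNReal.ofReal t := by
      rw [lintegral_indicator measurableSet_Ioi, Measure.restrict_restrict measurableSet_Ioi,
        Set.inter_eq_self_of_subset_left hIoi3]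
      have hint : IntegrableOn (fun u : ℝ => u ^ (-2:ℝ)) (Set.Ioi (1:ℝ)) :=
        integrableOn_Ioi_rpow_of_lt (by norm_num) one_pos
      rw [← ofReal_integral_eq_lintegral_ofReal (hint.const_mul t) ?_]
      · rw [integral_const_mul, integral_Ioi_rpow_of_lt (by norm_num) one_pos]
        norm_num
      · filter_upwards [ae_restrict_mem measurableSet_Ioi] with x hx
        exact mul_nonneg (le_of_lt ht0) (Real.rpow_nonneg (by linarith [Set.mem_Ioi.1 hx]) _)
    have key : (∫⁻ u in Set.Ioi (0:ℝ), F u)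
        = ENNReal.ofReal t + ENNReal.ofReal (t * L) + ENNReal.ofReal t := by
      simp only [hF]
      rw [lintegral_add_left (show Measurable fun u : ℝ => (Set.Ioc (0:ℝ) t).indicator (fun _ => (1:ℝ≥0∞)) u +
          (Set.Ioc t 1).indicator (fun u => ENNReal.ofReal (t / u)) u from hm1.add hm2),
        lintegral_add_left hm1, e1, e2, e3]
    rw [key, ← ENNReal.ofReal_add (le_of_lt ht0) (by positivity : (0:ℝ) ≤ t * L),
      ← ENNReal.ofReal_add (by positivity) (le_of_lt ht0),
      show t + t * L + t = t * (2 + L) by ring]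
  -- assemble
  have hI : (∫⁻ u in Set.Ioi (0:ℝ), Kfun NA₀ NA₁ (t / u) f * Kfun NB₀ NB₁ u g / ENNReal.ofReal u)
      ≤ ENNReal.ofReal (t * (2 + L)) * N := by
    calc _ ≤ ∫⁻ u in Set.Ioi (0:ℝ), F u * N :=
          setLIntegral_mono (hFmeas.mul_const N) hpt
      _ = (∫⁻ u in Set.Ioi (0:ℝ), F u) * N := lintegral_mul_const N hFmeas
      _ ≤ ENNReal.ofReal (t * (2 + L)) * N := mul_le_mul_left hJ N
  refine (hT f g t ht0).trans ?_
  calc ENNReal.ofReal c *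
        (∫⁻ u in Set.Ioi (0:ℝ), Kfun NA₀ NA₁ (t / u) f * Kfun NB₀ NB₁ u g / ENNReal.ofReal u)
      ≤ ENNReal.ofReal c * (ENNReal.ofReal (t * (2 + L)) * N) := mul_le_mul_right hI _
    _ = ENNReal.ofReal (c * (t * (2 + L))) * N := by
        rw [ENNReal.ofReal_mul (le_of_lt hc), mul_assoc]
    _ ≤ ENNReal.ofReal (2 * c * (t * (1 + L))) * N := by
        apply mul_le_mul_left
        apply ENNReal.ofReal_le_ofReal
        nlinarith [mul_nonneg (mul_nonneg hc.le ht0.le) hL0]
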